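/- arXiv:2506.10339 — 2 statements merged into one kernel-verified Lean document; each statement's English description precedes it below -/
import Mathlib

section
/- Let ε ∈ (0,1) and suppose Λ < exp((ε²/6)·H_Σ/H_max), where H_max = max_{i∈[n]} H_i. Then there exists an integer shift vector τ ∈ ℤ^n with I_max(τ) ≤ ((1+ε)/2)·Σ_{i=1}^n H_i·(1 + 1/T_i); in particular, OPT^disc ≤ ((1+ε)/2)·Σ_{i=1}^n H_i·(1 + 1/T_i). -/
open Finset Real

noncomputable def invLevel (T H : ℕ) (τ t : ℤ) : ℝ :=
  (H : ℝ) * (1 - (((t - τ) % (T : ℤ) : ℤ) : ℝ) / (T : ℝ))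

noncomputable def totalInv {ι : Type*} [Fintype ι] (T H : ι → ℕ) (τ : ι → ℤ) (t : ℤ) : ℝ :=
  ∑ i, invLevel (T i) (H i) (τ i) t

def cycleLen {ι : Type*} [Fintype ι] (T : ι → ℕ) : ℕ := Finset.univ.lcm T

noncomputable def Imax {ι : Type*} [Fintype ι] (T H : ι → ℕ) (τ : ι → ℤ) : ℝ :=
  sSup (totalInv T H τ '' Set.Ico (0 : ℤ) (cycleLen T : ℤ))

noncomputable def OPTdisc {ι : Type*} [Fintype ι] (T H : ι → ℕ) : ℝ :=
  sInf (Set.range (Imax T H))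


lemma sum_shift_emod (T : ℕ) (hT : 0 < T) (t : ℤ) :
    ∑ τ : Fin T, ((t - (τ : ℤ)) % (T : ℤ)) = ∑ r : Fin T, (r : ℤ) := by
  have hT' : (0 : ℤ) < (T : ℤ) := by exact_mod_cast hT
  have key : ∀ τ : Fin T, (((t - (τ : ℤ)) % (T : ℤ)).toNat) < T := by
    intro τ
    have h1 : (t - (τ : ℤ)) % (T : ℤ) < (T : ℤ) := Int.emod_lt_of_pos _ hT'
    have h0 : 0 ≤ (t - (τ : ℤ)) % (T : ℤ) := Int.emod_nonneg _ (by positivity)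
    omega
  set e : Fin T → Fin T := fun τ => ⟨((t - (τ : ℤ)) % (T : ℤ)).toNat, key τ⟩ with he
  have hinj : Function.Injective e := by
    intro a b hab
    have h0a : 0 ≤ (t - (a : ℤ)) % (T : ℤ) := Int.emod_nonneg _ (by positivity)
    have h0b : 0 ≤ (t - (b : ℤ)) % (T : ℤ) := Int.emod_nonneg _ (by positivity)
    have h : (t - (a : ℤ)) % (T : ℤ) = (t - (b : ℤ)) % (T : ℤ) := by
      have := congrArg (fun x : Fin T => ((x : ℕ) : ℤ)) hab
      simp only [he] at this
      omega
    have hdvd : (T : ℤ) ∣ ((b : ℤ) - (a : ℤ)) := by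
      have hm : (t - (a : ℤ)) ≡ (t - (b : ℤ)) [ZMOD (T : ℤ)] := h
      have := Int.ModEq.dvd hm
      have h2 : (T : ℤ) ∣ ((a : ℤ) - (b : ℤ)) := by simpa using this
      exact dvd_sub_comm.mp h2
    have hz : ((b : ℤ) - (a : ℤ)) = 0 := by
      refine Int.eq_zero_of_abs_lt_dvd hdvd ?_
      have ha' : (a : ℤ) < T := by exact_mod_cast a.2
      have hb' : (b : ℤ) < T := by exact_mod_cast b.2
      have ha0 : 0 ≤ (a : ℤ) := by positivity
      have hb0 : 0 ≤ (b : ℤ) := by positivity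
      rw [abs_lt]; omega
    have : (a : ℕ) = (b : ℕ) := by omega
    exact Fin.ext this
  have hbij : Function.Bijective e := Finite.injective_iff_bijective.mp hinj
  calc ∑ τ : Fin T, ((t - (τ : ℤ)) % (T : ℤ)) = ∑ τ : Fin T, ((e τ : ℕ) : ℤ) := by
        refine Finset.sum_congr rfl fun τ _ => ?_
        simp only [he]
        have h0 : 0 ≤ (t - (τ : ℤ)) % (T : ℤ) := Int.emod_nonneg _ (by positivity)
        omega
    _ = ∑ r : Fin T, (r : ℤ) := Fintype.sum_bijective e hbij _ _ (fun τ => rfl)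

lemma sum_invLevel (T Hh : ℕ) (hT : 0 < T) (t : ℤ) :
    ∑ τ : Fin T, invLevel T Hh (τ : ℤ) t = (Hh : ℝ) * (T + 1) / 2 := by
  have hT0 : (0:ℝ) < T := by exact_mod_cast hT
  have hz : ∑ τ : Fin T, (((t - (τ : ℤ)) % (T : ℤ) : ℤ) : ℝ) = (T : ℝ) * (T - 1) / 2 := by
    have := sum_shift_emod T hT t
    have hzsum : ∀ k : ℕ, (∑ x ∈ Finset.range k, (x : ℤ)) * 2 = (k : ℤ) * ((k : ℤ) - 1) := by
      intro k
      induction k with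
      | zero => simp
      | succ m ih => rw [Finset.sum_range_succ]; push_cast at ih ⊢; ring_nf; ring_nf at ih; linarith
    have h2 : (∑ τ : Fin T, ((t - (τ : ℤ)) % (T : ℤ))) * 2 = (T : ℤ) * ((T : ℤ) - 1) := by
      rw [this, Fin.sum_univ_eq_sum_range]; exact hzsum T
    have := congrArg (fun z : ℤ => (z : ℝ)) h2
    push_cast at this
    linarith
  simp only [invLevel]
  rw [← Finset.mul_sum]
  have : ∑ τ : Fin T, (1 - (((t - (τ:ℤ)) % (T : ℤ) : ℤ) : ℝ) / (T : ℝ))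
      = (T : ℝ) - ((T:ℝ) * ((T:ℝ) - 1) / 2) / T := by
    rw [Finset.sum_sub_distrib]
    simp only [Finset.sum_const, Finset.card_univ, Fintype.card_fin, nsmul_eq_mul, mul_one]
    rw [← Finset.sum_div, hz]
  rw [this]
  field_simp
  ring

lemma invLevel_nonneg (T Hh : ℕ) (hT : 0 < T) (τ t : ℤ) : 0 ≤ invLevel T Hh τ t := by
  have hT0 : (0:ℝ) < T := by exact_mod_cast hT
  have h1 : (t - τ) % (T : ℤ) < (T : ℤ) := Int.emod_lt_of_pos _ (by exact_mod_cast hT)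
  have h1' : (((t - τ) % (T : ℤ) : ℤ) : ℝ) < (T : ℝ) := by exact_mod_cast h1
  have : (((t - τ) % (T : ℤ) : ℤ) : ℝ) / (T : ℝ) < 1 := (div_lt_one hT0).mpr h1'
  have hH0 : (0:ℝ) ≤ Hh := by positivity
  apply mul_nonneg hH0; linarith

lemma invLevel_le (T Hh : ℕ) (hT : 0 < T) (τ t : ℤ) : invLevel T Hh τ t ≤ Hh := by
  have hT0 : (0:ℝ) < T := by exact_mod_cast hT
  have h0 : 0 ≤ (t - τ) % (T : ℤ) := Int.emod_nonneg _ (by positivity)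
  have h0' : (0:ℝ) ≤ (((t - τ) % (T : ℤ) : ℤ) : ℝ) := by exact_mod_cast h0
  have : 0 ≤ (((t - τ) % (T : ℤ) : ℤ) : ℝ) / (T : ℝ) := by positivity
  have hH0 : (0:ℝ) ≤ Hh := by positivity
  calc invLevel T Hh τ t ≤ (Hh:ℝ) * 1 := by
        apply mul_le_mul_of_nonneg_left _ hH0; linarith
    _ = Hh := mul_one _

-- convexity: exp(l*x) ≤ 1 + (exp l - 1) * x for x ∈ [0,1]
lemma exp_mul_le_affine {l x : ℝ} (h0 : 0 ≤ x) (h1 : x ≤ 1) :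
    Real.exp (l * x) ≤ 1 + (Real.exp l - 1) * x := by
  have := convexOn_exp.2 (Set.mem_univ (0:ℝ)) (Set.mem_univ l)
    (by linarith : (0:ℝ) ≤ 1 - x) h0 (by ring)
  simp only [smul_eq_mul, mul_zero, zero_add, Real.exp_zero, mul_one] at this
  calc Real.exp (l * x) = Real.exp (x * l) := by ring_nf
    _ ≤ (1 - x) * 1 + x * Real.exp l := by simpa using this
    _ = 1 + (Real.exp l - 1) * x := by ring

-- exp(2ε/3) ≤ 1 + 2ε/3 + ε²/3 for ε ∈ (0,1)
lemma exp_two_eps_third_le {ε : ℝ} (h0 : 0 < ε) (h1 : ε < 1) :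
    Real.exp (2 * ε / 3) ≤ 1 + 2 * ε / 3 + ε ^ 2 / 3 := by
  have hx0 : (0:ℝ) ≤ 2 * ε / 3 := by linarith
  have hx1 : 2 * ε / 3 ≤ 1 := by linarith
  have := Real.exp_bound' hx0 hx1 (n := 3) (by norm_num)
  have heval : (∑ m ∈ Finset.range 3, (2 * ε / 3) ^ m / m.factorial) +
      (2 * ε / 3) ^ 3 * (3 + 1) / (Nat.factorial 3 * 3)
      = 1 + 2*ε/3 + 2*ε^2/9 + 16*ε^3/243 := by
    simp [Finset.sum_range_succ, Nat.factorial]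
    ring
  norm_num at this heval
  rw [heval] at this
  nlinarith [sq_nonneg ε, pow_pos h0 3]

lemma coord_bound (T Hh : ℕ) (hT : 0 < T) (c l : ℝ) (hc : (Hh:ℝ) ≤ c) (hc0 : 0 < c) (t : ℤ) :
    ∑ τ : Fin T, Real.exp (l / c * invLevel T Hh (τ:ℤ) t)
      ≤ (T:ℝ) * Real.exp ((Real.exp l - 1) * ((Hh:ℝ) * (1 + 1/(T:ℝ)) / 2) / c) := by
  have hT0 : (0:ℝ) < T := by exact_mod_cast hT
  have step1 : ∀ τ : Fin T, Real.exp (l / c * invLevel T Hh (τ:ℤ) t)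
      ≤ 1 + (Real.exp l - 1) * (invLevel T Hh (τ:ℤ) t / c) := by
    intro τ
    have hx0 : 0 ≤ invLevel T Hh (τ:ℤ) t / c :=
      div_nonneg (invLevel_nonneg T Hh hT _ t) hc0.le
    have hx1 : invLevel T Hh (τ:ℤ) t / c ≤ 1 :=
      (div_le_one hc0).mpr (le_trans (invLevel_le T Hh hT _ t) hc)
    have := exp_mul_le_affine (l := l) hx0 hx1
    calc Real.exp (l / c * invLevel T Hh (τ:ℤ) t)
        = Real.exp (l * (invLevel T Hh (τ:ℤ) t / c)) := by ring_nf
      _ ≤ _ := this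
  calc ∑ τ : Fin T, Real.exp (l / c * invLevel T Hh (τ:ℤ) t)
      ≤ ∑ τ : Fin T, (1 + (Real.exp l - 1) * (invLevel T Hh (τ:ℤ) t / c)) :=
        Finset.sum_le_sum fun τ _ => step1 τ
    _ = (T:ℝ) + (Real.exp l - 1) / c * ((Hh:ℝ) * (T + 1) / 2) := by
        rw [Finset.sum_add_distrib]
        simp only [Finset.sum_const, Finset.card_univ, Fintype.card_fin, nsmul_eq_mul, mul_one]
        congr 1
        rw [← Finset.mul_sum]
        rw [show (∑ τ : Fin T, invLevel T Hh (τ:ℤ) t / c)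
            = (∑ τ : Fin T, invLevel T Hh (τ:ℤ) t) / c from (Finset.sum_div _ _ _).symm]
        rw [sum_invLevel T Hh hT t]
        ring
    _ = (T:ℝ) * (1 + (Real.exp l - 1) * ((Hh:ℝ) * (1 + 1/(T:ℝ)) / 2) / c) := by
        field_simp
    _ ≤ (T:ℝ) * Real.exp ((Real.exp l - 1) * ((Hh:ℝ) * (1 + 1/(T:ℝ)) / 2) / c) := by
        apply mul_le_mul_of_nonneg_left _ hT0.le
        have := Real.add_one_le_exp ((Real.exp l - 1) * ((Hh:ℝ) * (1 + 1/(T:ℝ)) / 2) / c)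
        linarith

set_option maxHeartbeats  2000000 in
/-- If `Λ < exp((ε²/6)·H_Σ/H_max)`, then some integer shift vector has peak inventory
level at most `((1+ε)/2)·Σ H_i(1+1/T_i)`; in particular `OPT^disc` is at most this. -/
theorem stmt3 {n : ℕ} (hn : 0 < n) (T H : Fin n → ℕ) (hT : ∀ i, 0 < T i)
    (hH : ∀ i, 0 < H i) (ε : ℝ) (hε : ε ∈ Set.Ioo (0 : ℝ) 1)
    (hΛ : (cycleLen T : ℝ)
      < Real.exp ((ε ^ 2 / 6) * ((∑ i, (H i : ℝ)) / ((Finset.univ.sup H : ℕ) : ℝ)))) :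
    (∃ τ : Fin n → ℤ,
      Imax T H τ ≤ ((1 + ε) / 2) * ∑ i, (H i : ℝ) * (1 + 1 / (T i : ℝ))) ∧
    OPTdisc T H ≤ ((1 + ε) / 2) * ∑ i, (H i : ℝ) * (1 + 1 / (T i : ℝ)) := by
  classical
  obtain ⟨hε0, hε1⟩ := hε
  obtain ⟨i0⟩ : Nonempty (Fin n) := ⟨⟨0, hn⟩⟩
  set Λ : ℕ := cycleLen T with hΛdef
  have hΛpos : 0 < Λ := by
    rw [hΛdef, cycleLen]
    rcases Nat.eq_zero_or_pos (Finset.univ.lcm T) with h | h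
    · exfalso
      rw [Finset.lcm_eq_zero_iff] at h
      obtain ⟨i, _, hi⟩ := h
      exact (hT i).ne' hi
    · exact h
  set c : ℝ := ((Finset.univ.sup H : ℕ) : ℝ) with hcdef
  have hc0 : 0 < c := by
    have h1 := Finset.le_sup (f := H) (Finset.mem_univ i0)
    have h2 : 0 < Finset.univ.sup H := lt_of_lt_of_le (hH i0) h1
    rw [hcdef]
    exact_mod_cast h2
  have hc : ∀ i, (H i : ℝ) ≤ c := fun i => by
    rw [hcdef]
    exact_mod_cast Finset.le_sup (f := H) (Finset.mem_univ i)
  set M : ℝ := ∑ i, (H i : ℝ) * (1 + 1/(T i : ℝ)) with hMdef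
  set l : ℝ := 2 * ε / 3 with hldef
  set a : ℝ := (1 + ε) / 2 * M with hadef
  have hHM : (∑ i, (H i : ℝ)) ≤ M := by
    apply Finset.sum_le_sum
    intro i _
    have hTi : (0:ℝ) < T i := by exact_mod_cast hT i
    have : (0:ℝ) ≤ 1 / (T i : ℝ) := by positivity
    nlinarith [Nat.cast_nonneg (H i) (α := ℝ)]
  have hM0 : 0 ≤ M := le_trans (by positivity) hHM
  set S : ℤ → (∀ i, Fin (T i)) → ℝ :=
    fun t ω => totalInv T H (fun i => ((ω i : ℕ) : ℤ)) t with hSdef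
  set δ : ℝ := Real.exp (-(ε ^ 2 / 6) * ((∑ i, (H i : ℝ)) / c)) with hδdef
  -- per-time-step Chernoff bound
  have key : ∀ t : ℤ,
      ((Finset.univ.filter (fun ω : ∀ i, Fin (T i) => a ≤ S t ω)).card : ℝ)
        ≤ (∏ i, (T i : ℝ)) * δ := by
    intro t
    have mgf : ∑ ω : ∀ i, Fin (T i), Real.exp (l / c * S t ω)
        ≤ (∏ i, (T i : ℝ)) * Real.exp ((Real.exp l - 1) * (M / 2) / c) := by
      have hfac : ∀ ω : ∀ i, Fin (T i), Real.exp (l / c * S t ω)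
          = ∏ i, Real.exp (l / c * invLevel (T i) (H i) ((ω i : ℕ) : ℤ) t) := by
        intro ω
        simp only [hSdef, totalInv, Finset.mul_sum]
        exact Real.exp_sum _ _
      calc ∑ ω : ∀ i, Fin (T i), Real.exp (l / c * S t ω)
          = ∑ ω : ∀ i, Fin (T i), ∏ i,
              Real.exp (l / c * invLevel (T i) (H i) ((ω i : ℕ) : ℤ) t) :=
            Finset.sum_congr rfl fun ω _ => hfac ω
        _ = ∏ i, ∑ τ : Fin (T i), Real.exp (l / c * invLevel (T i) (H i) (τ : ℤ) t) :=
            (Fintype.prod_sum (fun i (τ : Fin (T i)) =>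
              Real.exp (l / c * invLevel (T i) (H i) (τ : ℤ) t))).symm
        _ ≤ ∏ i, ((T i : ℝ) *
              Real.exp ((Real.exp l - 1) * ((H i : ℝ) * (1 + 1/(T i : ℝ)) / 2) / c)) := by
            apply Finset.prod_le_prod
            · intro i _
              apply Finset.sum_nonneg
              intro τ _
              positivity
            · intro i _
              exact coord_bound (T i) (H i) (hT i) c l (hc i) hc0 t
        _ = (∏ i, (T i : ℝ)) * Real.exp ((Real.exp l - 1) * (M / 2) / c) := by
            rw [Finset.prod_mul_distrib, ← Real.exp_sum]
            rw [hMdef, Finset.sum_div, Finset.mul_sum, Finset.sum_div]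
    have markov : ((Finset.univ.filter (fun ω : ∀ i, Fin (T i) => a ≤ S t ω)).card : ℝ)
          * Real.exp (l / c * a)
        ≤ ∑ ω : ∀ i, Fin (T i), Real.exp (l / c * S t ω) := by
      have hlc : 0 ≤ l / c := by
        apply div_nonneg _ hc0.le
        rw [hldef]; linarith
      calc ((Finset.univ.filter (fun ω : ∀ i, Fin (T i) => a ≤ S t ω)).card : ℝ)
            * Real.exp (l / c * a)
          = ∑ _ω ∈ Finset.univ.filter (fun ω : ∀ i, Fin (T i) => a ≤ S t ω),
              Real.exp (l / c * a) := by
            rw [Finset.sum_const, nsmul_eq_mul]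
        _ ≤ ∑ ω ∈ Finset.univ.filter (fun ω : ∀ i, Fin (T i) => a ≤ S t ω),
              Real.exp (l / c * S t ω) := by
            apply Finset.sum_le_sum
            intro ω hω
            rw [Finset.mem_filter] at hω
            exact Real.exp_le_exp.mpr (mul_le_mul_of_nonneg_left hω.2 hlc)
        _ ≤ ∑ ω : ∀ i, Fin (T i), Real.exp (l / c * S t ω) := by
            apply Finset.sum_le_sum_of_subset_of_nonneg (Finset.filter_subset _ _)
            intro ω _ _
            positivity
    have hcard : ((Finset.univ.filter (fun ω : ∀ i, Fin (T i) => a ≤ S t ω)).card : ℝ)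
        ≤ (∏ i, (T i : ℝ)) * Real.exp ((Real.exp l - 1) * (M / 2) / c - l / c * a) := by
      have hexp : (0:ℝ) < Real.exp (l / c * a) := Real.exp_pos _
      rw [Real.exp_sub]
      calc ((Finset.univ.filter (fun ω : ∀ i, Fin (T i) => a ≤ S t ω)).card : ℝ)
          ≤ ((∏ i, (T i : ℝ)) * Real.exp ((Real.exp l - 1) * (M / 2) / c))
              / Real.exp (l / c * a) := by
            rw [le_div_iff₀ hexp]
            exact le_trans markov mgf
        _ = (∏ i, (T i : ℝ)) * (Real.exp ((Real.exp l - 1) * (M / 2) / c)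
              / Real.exp (l / c * a)) := by ring
    refine le_trans hcard ?_
    apply mul_le_mul_of_nonneg_left _ (by positivity)
    rw [hδdef]
    apply Real.exp_le_exp.mpr
    -- exponent inequality
    have hq : Real.exp l - 1 - l * (1 + ε) ≤ -(ε ^ 2 / 3) := by
      have := exp_two_eps_third_le hε0 hε1
      rw [hldef]
      nlinarith
    have hK : (∑ i, (H i : ℝ)) / (2 * c) ≤ (M / 2) / c := by
      rw [div_le_div_iff₀ (by positivity) hc0]
      nlinarith
    have hK0 : 0 ≤ (M / 2) / c := by positivity
    calc (Real.exp l - 1) * (M / 2) / c - l / c * a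
        = (Real.exp l - 1 - l * (1 + ε)) * ((M / 2) / c) := by
          rw [hadef]; field_simp
      _ ≤ -(ε ^ 2 / 3) * ((M / 2) / c) := by
          apply mul_le_mul_of_nonneg_right hq hK0
      _ ≤ -(ε ^ 2 / 3) * ((∑ i, (H i : ℝ)) / (2 * c)) :=
          mul_le_mul_of_nonpos_left hK (by nlinarith : -(ε ^ 2 / 3) ≤ 0)
      _ = -(ε ^ 2 / 6) * ((∑ i, (H i : ℝ)) / c) := by
          ring
  -- union bound
  have hΛδ : (Λ : ℝ) * δ < 1 := by
    rw [hδdef]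
    have : (Λ : ℝ) < Real.exp ((ε ^ 2 / 6) * ((∑ i, (H i : ℝ)) / c)) := hΛ
    calc (Λ : ℝ) * Real.exp (-(ε ^ 2 / 6) * ((∑ i, (H i : ℝ)) / c))
        < Real.exp ((ε ^ 2 / 6) * ((∑ i, (H i : ℝ)) / c))
            * Real.exp (-(ε ^ 2 / 6) * ((∑ i, (H i : ℝ)) / c)) := by
          apply mul_lt_mul_of_pos_right this (Real.exp_pos _)
      _ = 1 := by rw [← Real.exp_add]; ring_nf; exact Real.exp_zero
  set bad : Finset (∀ i, Fin (T i)) :=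
    Finset.univ.filter (fun ω => ∃ t ∈ Finset.range Λ, a ≤ S (t : ℤ) ω) with hbaddef
  have hbadcard : (bad.card : ℝ) < ∏ i, (T i : ℝ) := by
    have hsub : bad ⊆ (Finset.range Λ).biUnion
        (fun t => Finset.univ.filter (fun ω => a ≤ S (t : ℤ) ω)) := by
      intro ω hω
      rw [hbaddef, Finset.mem_filter] at hω
      obtain ⟨t, ht, hat⟩ := hω.2
      exact Finset.mem_biUnion.mpr ⟨t, ht, Finset.mem_filter.mpr ⟨Finset.mem_univ _, hat⟩⟩
    calc (bad.card : ℝ)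
        ≤ (((Finset.range Λ).biUnion
            (fun t => Finset.univ.filter (fun ω => a ≤ S (t : ℤ) ω))).card : ℝ) := by
          exact_mod_cast Finset.card_le_card hsub
      _ ≤ ∑ t ∈ Finset.range Λ,
            ((Finset.univ.filter (fun ω => a ≤ S (t : ℤ) ω)).card : ℝ) := by
          exact_mod_cast Finset.card_biUnion_le
      _ ≤ ∑ _t ∈ Finset.range Λ, (∏ i, (T i : ℝ)) * δ :=
          Finset.sum_le_sum fun t _ => key (t : ℤ)
      _ = (Λ : ℝ) * ((∏ i, (T i : ℝ)) * δ) := by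
          rw [Finset.sum_const, Finset.card_range, nsmul_eq_mul]
      _ < ∏ i, (T i : ℝ) := by
          have hP : (0:ℝ) < ∏ i, (T i : ℝ) := by
            apply Finset.prod_pos; intro i _; exact_mod_cast hT i
          nlinarith [hΛδ, hP, mul_pos (Nat.cast_pos.mpr hΛpos : (0:ℝ) < (Λ:ℝ)) (Real.exp_pos (-(ε ^ 2 / 6) * ((∑ i, (H i : ℝ)) / c)))]
  -- find a good ω
  have hbad_ne : bad ≠ Finset.univ := by
    intro hcontra
    rw [hcontra] at hbadcard
    have : ((Finset.univ : Finset (∀ i, Fin (T i))).card : ℝ) = ∏ i, (T i : ℝ) := by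
      rw [Finset.card_univ, Fintype.card_pi]
      push_cast
      simp
    rw [this] at hbadcard
    exact lt_irrefl _ hbadcard
  obtain ⟨ω, hω⟩ : ∃ ω : ∀ i, Fin (T i), ω ∉ bad := by
    by_contra hcon
    push_neg at hcon
    exact hbad_ne (Finset.eq_univ_iff_forall.mpr hcon)
  have hgood : ∀ t ∈ Finset.range Λ, S (t : ℤ) ω < a := by
    intro t ht
    by_contra hge
    push_neg at hge
    exact hω (Finset.mem_filter.mpr ⟨Finset.mem_univ _, ⟨t, ht, hge⟩⟩)
  set τ : Fin n → ℤ := fun i => ((ω i : ℕ) : ℤ) with hτdef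
  have hImax : Imax T H τ ≤ (1 + ε) / 2 * M := by
    rw [Imax]
    apply csSup_le
    · refine ⟨totalInv T H τ 0, ⟨0, ?_, rfl⟩⟩
      constructor
      · exact le_refl 0
      · exact_mod_cast hΛpos
    · rintro x ⟨s, ⟨hs0, hsΛ⟩, rfl⟩
      have hsnat : s.toNat ∈ Finset.range Λ := by
        rw [Finset.mem_range]
        omega
      have heq : totalInv T H τ s = S ((s.toNat : ℕ) : ℤ) ω := by
        rw [hSdef, hτdef]
        congr 1
        omega
      rw [heq]
      have := hgood s.toNat hsnat
      rw [hadef] at this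
      linarith
  refine ⟨⟨τ, hImax⟩, ?_⟩
  have hbdd : BddBelow (Set.range (Imax T H)) := by
    refine ⟨0, ?_⟩
    rintro x ⟨τ', rfl⟩
    rw [Imax]
    have hmem : totalInv T H τ' 0 ∈ totalInv T H τ' '' Set.Ico (0 : ℤ) (cycleLen T : ℤ) := by
      refine ⟨0, ⟨le_refl _, ?_⟩, rfl⟩
      exact_mod_cast hΛpos
    have hbddabove : BddAbove (totalInv T H τ' '' Set.Ico (0 : ℤ) (cycleLen T : ℤ)) :=
      ((Set.finite_Ico (0 : ℤ) (cycleLen T : ℤ)).image _).bddAbove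
    have h0 : 0 ≤ totalInv T H τ' 0 := by
      apply Finset.sum_nonneg
      intro i _
      exact invLevel_nonneg (T i) (H i) (hT i) _ _
    exact le_trans h0 (le_csSup hbddabove hmem)
  exact le_trans (csInf_le hbdd ⟨τ, rfl⟩) hImax
end

section
/- Let ε ∈ (0,1). Suppose the instance has K distinct time intervals T_(1), …, T_(K), and let S_k = {i ∈ [n] : T_i = T_(k)}. For each k ∈ [K] let D_(k) be a set of integer shifts with |D_(k)| ≤ ⌊1/ε⌋ + 1, and let {S^D_{k,τ}}_{τ∈D_(k)} and {S^APX_{k,τ}}_{τ∈D_(k)} be two partitions of S_k such that H(S^APX_{k,τ}) ≤ (1 + ε)·H(S^D_{k,τ}) + (2ε²/K)·H_Σ for every k ∈ [K] and τ ∈ D_(k), where H(S) = Σ_{i∈S} H_i. Let τ^D be the shift vector assigning shift τ to every item of S^D_{k,τ}, and let τ^APX be the shift vector assigning shift τ to every item of S^APX_{k,τ}. If I_max(τ^D) ≤ (1 + 4ε)·OPT^disc, then I_max(τ^APX) ≤ (1 + 17ε)·OPT^disc. -/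
/-! ### Auxiliary definitions and lemmas -/

noncomputable def gfun (T : ℕ) (τ t : ℤ) : ℝ :=
  1 - (((t - τ) % (T : ℤ) : ℤ) : ℝ) / (T : ℝ)

lemma invLevel_eq (T H : ℕ) (τ t : ℤ) : invLevel T H τ t = (H : ℝ) * gfun T τ t := rfl

lemma gfun_nonneg (T : ℕ) (τ t : ℤ) : 0 ≤ gfun T τ t := by
  rcases Nat.eq_zero_or_pos T with h | hT
  · simp [gfun, h]
  have hT' : (0:ℤ) < (T:ℤ) := by exact_mod_cast hT
  have h1 : (t - τ) % (T:ℤ) < (T:ℤ) := Int.emod_lt_of_pos _ hT'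
  have hTR : (0:ℝ) < (T:ℝ) := by exact_mod_cast hT
  have : (((t - τ) % (T:ℤ) : ℤ) : ℝ) / (T:ℝ) ≤ 1 := by
    rw [div_le_one hTR]; exact_mod_cast h1.le
  simp only [gfun]; linarith

lemma gfun_le_one (T : ℕ) (τ t : ℤ) : gfun T τ t ≤ 1 := by
  rcases Nat.eq_zero_or_pos T with h | hT
  · simp [gfun, h]
  have hT' : ((T:ℤ)) ≠ 0 := by exact_mod_cast hT.ne'
  have h0 : (0:ℤ) ≤ (t - τ) % (T:ℤ) := Int.emod_nonneg _ hT'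
  have hTR : (0:ℝ) < (T:ℝ) := by exact_mod_cast hT
  have : (0:ℝ) ≤ (((t - τ) % (T:ℤ) : ℤ) : ℝ) / (T:ℝ) :=
    div_nonneg (by exact_mod_cast h0) hTR.le
  simp only [gfun]; linarith

lemma emod_reflect {T : ℤ} (hT : 0 < T) (a : ℤ) : (-a - 1) % T = T - 1 - a % T := by
  have h0 : 0 ≤ a % T := Int.emod_nonneg _ hT.ne'
  have h1 : a % T < T := Int.emod_lt_of_pos _ hT
  have hrep : -a - 1 = (T - 1 - a % T) + T * (-(a / T) - 1) := by
    have := Int.mul_ediv_add_emod a T; linarith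
  rw [hrep, Int.add_mul_emod_self_left, Int.emod_eq_of_lt (by linarith) (by linarith)]

lemma gfun_add_reflect {T : ℕ} (hT : 0 < T) {Λ : ℕ} (hdvd : T ∣ Λ) (τ t : ℤ) :
    gfun T τ t + gfun T τ ((2 * τ - 1 - t) % (Λ:ℤ)) = 1 + 1 / (T:ℝ) := by
  have hT' : (0:ℤ) < (T:ℤ) := by exact_mod_cast hT
  have hdvd' : ((T:ℤ)) ∣ ((Λ:ℤ)) := by exact_mod_cast hdvd
  have hmod : ((2 * τ - 1 - t) % (Λ:ℤ) - τ) % (T:ℤ) = (-(t - τ) - 1) % (T:ℤ) := by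
    conv_lhs => rw [Int.sub_emod]
    rw [Int.emod_emod_of_dvd _ hdvd', ← Int.sub_emod]
    congr 1; ring
  have hrefl := emod_reflect hT' (t - τ)
  have hTR : (0:ℝ) < (T:ℝ) := by exact_mod_cast hT
  simp only [gfun, hmod, hrefl]
  have hcast : (((T:ℤ) - 1 - (t - τ) % (T:ℤ) : ℤ) : ℝ)
      = (T:ℝ) - 1 - (((t - τ) % (T:ℤ) : ℤ) : ℝ) := by push_cast; ring
  rw [hcast]
  field_simp
  ring

/-- Over a full cycle, the average inventory factor of one item is at least `1/2`. -/
lemma sum_gfun_ge {T Λ : ℕ} (hT : 0 < T) (hΛ : 0 < Λ) (hdvd : T ∣ Λ) (τ : ℤ) :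
    (Λ:ℝ) / 2 ≤ ∑ t ∈ Finset.Ico (0:ℤ) (Λ:ℤ), gfun T τ t := by
  set e : ℤ → ℤ := fun t => (2*τ - 1 - t) % (Λ:ℤ) with he_def
  have hΛ' : (0:ℤ) < (Λ:ℤ) := by exact_mod_cast hΛ
  have hmem : ∀ t ∈ Finset.Ico (0:ℤ) (Λ:ℤ), e t ∈ Finset.Ico (0:ℤ) (Λ:ℤ) := by
    intro t _
    simp only [Finset.mem_Ico]
    exact ⟨Int.emod_nonneg _ hΛ'.ne', Int.emod_lt_of_pos _ hΛ'⟩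
  have hinv : ∀ t ∈ Finset.Ico (0:ℤ) (Λ:ℤ), e (e t) = t := by
    intro t ht
    simp only [Finset.mem_Ico] at ht
    simp only [he_def]
    conv_lhs => rw [Int.sub_emod (2*τ-1) _]
    rw [Int.emod_emod_of_dvd _ dvd_rfl, ← Int.sub_emod]
    have h : 2*τ - 1 - (2*τ - 1 - t) = t := by ring
    rw [h, Int.emod_eq_of_lt ht.1 ht.2]
  have hsum : ∑ t ∈ Finset.Ico (0:ℤ) (Λ:ℤ), gfun T τ t
      = ∑ t ∈ Finset.Ico (0:ℤ) (Λ:ℤ), gfun T τ (e t) := by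
    refine Finset.sum_nbij' e e hmem hmem hinv hinv ?_
    intro t ht
    rw [hinv t ht]
  have hcard : (Finset.Ico (0:ℤ) (Λ:ℤ)).card = Λ := by
    rw [Int.card_Ico]; simp
  have h2 : 2 * ∑ t ∈ Finset.Ico (0:ℤ) (Λ:ℤ), gfun T τ t = (Λ:ℝ) * (1 + 1/(T:ℝ)) := by
    have : 2 * ∑ t ∈ Finset.Ico (0:ℤ) (Λ:ℤ), gfun T τ t
        = ∑ t ∈ Finset.Ico (0:ℤ) (Λ:ℤ), (gfun T τ t + gfun T τ (e t)) := by
      rw [Finset.sum_add_distrib, ← hsum]; ring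
    rw [this, Finset.sum_congr rfl (fun t _ => gfun_add_reflect hT hdvd τ t),
      Finset.sum_const, hcard, nsmul_eq_mul]
  have hTR : (0:ℝ) < (T:ℝ) := by exact_mod_cast hT
  have hΛR : (0:ℝ) ≤ (Λ:ℝ) := by positivity
  have : (0:ℝ) ≤ (Λ:ℝ) * (1/(T:ℝ)) := by positivity
  linarith [h2]

lemma cycleLen_pos {n : ℕ} (T : Fin n → ℕ) (hT : ∀ i, 0 < T i) : 0 < cycleLen T := by
  refine Nat.pos_of_ne_zero fun h => ?_
  rw [cycleLen, Finset.lcm_eq_zero_iff] at h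
  obtain ⟨i, -, hi⟩ := h
  exact absurd hi (hT i).ne'

lemma totalInv_le_Imax {n : ℕ} (T H : Fin n → ℕ) (τ : Fin n → ℤ) (t : ℤ)
    (ht : t ∈ Finset.Ico (0:ℤ) (cycleLen T : ℤ)) : totalInv T H τ t ≤ Imax T H τ := by
  have hfin : (totalInv T H τ '' Set.Ico (0:ℤ) (cycleLen T : ℤ)).Finite :=
    (Set.finite_Ico _ _).image _
  refine le_csSup hfin.bddAbove ⟨t, ?_, rfl⟩
  simpa [Set.mem_Ico, Finset.mem_Ico] using ht

/-- Peak inventory is at least half the total ordering quantity. -/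
lemma Imax_ge_half {n : ℕ} (T H : Fin n → ℕ) (hT : ∀ i, 0 < T i) (τ : Fin n → ℤ) :
    (∑ i, (H i : ℝ)) / 2 ≤ Imax T H τ := by
  have hΛ : 0 < cycleLen T := cycleLen_pos T hT
  have hΛR : (0:ℝ) < (cycleLen T : ℝ) := by exact_mod_cast hΛ
  have havg : (cycleLen T : ℝ) * ((∑ i, (H i:ℝ)) / 2)
      ≤ ∑ t ∈ Finset.Ico (0:ℤ) (cycleLen T : ℤ), totalInv T H τ t := by
    unfold totalInv
    rw [Finset.sum_comm, Finset.sum_div, Finset.mul_sum]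
    refine Finset.sum_le_sum fun i _ => ?_
    have hle := sum_gfun_ge (hT i) hΛ (Finset.dvd_lcm (Finset.mem_univ i)) (τ i)
    calc (cycleLen T : ℝ) * ((H i:ℝ) / 2) = (H i : ℝ) * ((cycleLen T : ℝ)/2) := by ring
      _ ≤ (H i : ℝ) * ∑ t ∈ Finset.Ico (0:ℤ) (cycleLen T : ℤ), gfun (T i) (τ i) t :=
          mul_le_mul_of_nonneg_left hle (by positivity)
      _ = ∑ t ∈ Finset.Ico (0:ℤ) (cycleLen T : ℤ), invLevel (T i) (H i) (τ i) t := by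
          rw [Finset.mul_sum]; rfl
  have hub : ∑ t ∈ Finset.Ico (0:ℤ) (cycleLen T : ℤ), totalInv T H τ t
      ≤ (cycleLen T : ℝ) * Imax T H τ := by
    have := Finset.sum_le_card_nsmul (Finset.Ico (0:ℤ) (cycleLen T : ℤ))
      (totalInv T H τ) (Imax T H τ) (fun t ht => totalInv_le_Imax T H τ t ht)
    rwa [nsmul_eq_mul, Int.card_Ico, show ((cycleLen T : ℤ) - 0).toNat = cycleLen T by simp] at this
  have := havg.trans hub
  exact le_of_mul_le_mul_left this hΛR

/-- Mimicking partitions preserve near-optimality: if the items are grouped by their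
`K` distinct time intervals, each class is partitioned according to shifts from the
sets `D_(k)` of size at most `⌊1/ε⌋+1`, and the cumulative ordering quantities of the
approximate partition classes satisfy
`H(S^APX_{k,τ}) ≤ (1+ε)·H(S^D_{k,τ}) + (2ε²/K)·H_Σ`, then
`I_max(τ^D) ≤ (1+4ε)·OPT^disc` implies `I_max(τ^APX) ≤ (1+17ε)·OPT^disc`. -/
theorem stmt15 {n K : ℕ} (hK : 0 < K) (T H : Fin n → ℕ) (hT : ∀ i, 0 < T i)
    (hH : ∀ i, 0 < H i) (ε : ℝ) (hε : ε ∈ Set.Ioo (0 : ℝ) 1)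
    (Tvals : Fin K → ℕ) (hTinj : Function.Injective Tvals)
    (kIdx : Fin n → Fin K) (hk : ∀ i, T i = Tvals (kIdx i))
    (D : Fin K → Finset ℤ) (hD : ∀ k, (D k).card ≤ ⌊1 / ε⌋₊ + 1)
    (τD τAPX : Fin n → ℤ)
    (hτD : ∀ i, τD i ∈ D (kIdx i)) (hτA : ∀ i, τAPX i ∈ D (kIdx i))
    (hmimic : ∀ k, ∀ τ' ∈ D k,
      ∑ i ∈ Finset.univ.filter (fun i => kIdx i = k ∧ τAPX i = τ'), (H i : ℝ)
        ≤ (1 + ε) * ∑ i ∈ Finset.univ.filter (fun i => kIdx i = k ∧ τD i = τ'), (H i : ℝ)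
          + (2 * ε ^ 2 / (K : ℝ)) * ∑ i, (H i : ℝ))
    (hgood : Imax T H τD ≤ (1 + 4 * ε) * OPTdisc T H) :
    Imax T H τAPX ≤ (1 + 17 * ε) * OPTdisc T H := by
  obtain ⟨hε0, hε1⟩ := hε
  set Hsum : ℝ := ∑ i, (H i : ℝ) with hHsum
  have hHsum0 : 0 ≤ Hsum := Finset.sum_nonneg fun i _ => by positivity
  set c : ℝ := (2 * ε ^ 2 / (K : ℝ)) * Hsum with hc
  have hKR : (0:ℝ) < (K:ℝ) := by exact_mod_cast hK
  have hc0 : 0 ≤ c := by positivity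
  -- OPT lower bound
  have hOPT : Hsum / 2 ≤ OPTdisc T H := by
    refine le_csInf ⟨Imax T H τD, ⟨τD, rfl⟩⟩ ?_
    rintro b ⟨τ, rfl⟩
    exact Imax_ge_half T H hT τ
  have hOPT0 : 0 ≤ OPTdisc T H := le_trans (by positivity) hOPT
  -- decomposition of total inventory by classes
  have decomp : ∀ (σ : Fin n → ℤ), (∀ i, σ i ∈ D (kIdx i)) → ∀ t : ℤ,
      totalInv T H σ t = ∑ k, ∑ τ' ∈ D k, gfun (Tvals k) τ' t *
        ∑ i ∈ Finset.univ.filter (fun i => kIdx i = k ∧ σ i = τ'), (H i : ℝ) := by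
    intro σ hσ t
    unfold totalInv
    rw [← Finset.sum_fiberwise Finset.univ kIdx (fun i => invLevel (T i) (H i) (σ i) t)]
    refine Finset.sum_congr rfl fun k _ => ?_
    rw [← Finset.sum_fiberwise_of_maps_to (t := D k) (g := σ)
      (fun i hi => by
        have hik : kIdx i = k := by simpa using (Finset.mem_filter.mp hi).2
        exact hik ▸ hσ i)
      (fun i => invLevel (T i) (H i) (σ i) t)]
    refine Finset.sum_congr rfl fun τ' _ => ?_
    rw [Finset.filter_filter, Finset.mul_sum]
    refine Finset.sum_congr (by simp) fun i hi => ?_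
    obtain ⟨-, hik, hiτ⟩ := Finset.mem_filter.mp hi
    rw [invLevel_eq, hk i, hik, hiτ, mul_comm]
  -- pointwise key bound
  have key : ∀ t : ℤ, totalInv T H τAPX t ≤ (1 + ε) * totalInv T H τD t + 4 * ε * Hsum := by
    intro t
    rw [decomp τAPX hτA t, decomp τD hτD t]
    have step1 : ∑ k, ∑ τ' ∈ D k, gfun (Tvals k) τ' t *
        ∑ i ∈ Finset.univ.filter (fun i => kIdx i = k ∧ τAPX i = τ'), (H i : ℝ)
        ≤ ∑ k, ∑ τ' ∈ D k, ((1 + ε) * (gfun (Tvals k) τ' t *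
          ∑ i ∈ Finset.univ.filter (fun i => kIdx i = k ∧ τD i = τ'), (H i : ℝ)) + c) := by
      refine Finset.sum_le_sum fun k _ => Finset.sum_le_sum fun τ' hτ' => ?_
      have hg0 := gfun_nonneg (Tvals k) τ' t
      have hg1 := gfun_le_one (Tvals k) τ' t
      calc gfun (Tvals k) τ' t *
            ∑ i ∈ Finset.univ.filter (fun i => kIdx i = k ∧ τAPX i = τ'), (H i : ℝ)
          ≤ gfun (Tvals k) τ' t * ((1 + ε) *
            (∑ i ∈ Finset.univ.filter (fun i => kIdx i = k ∧ τD i = τ'), (H i : ℝ)) + c) :=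
            mul_le_mul_of_nonneg_left (hmimic k τ' hτ') hg0
        _ = (1 + ε) * (gfun (Tvals k) τ' t *
            ∑ i ∈ Finset.univ.filter (fun i => kIdx i = k ∧ τD i = τ'), (H i : ℝ))
            + gfun (Tvals k) τ' t * c := by ring
        _ ≤ _ := by
            have : gfun (Tvals k) τ' t * c ≤ c := by
              nlinarith
            linarith
    have step2 : ∑ k, ∑ τ' ∈ D k, ((1 + ε) * (gfun (Tvals k) τ' t *
          ∑ i ∈ Finset.univ.filter (fun i => kIdx i = k ∧ τD i = τ'), (H i : ℝ)) + c)
        = (1 + ε) * (∑ k, ∑ τ' ∈ D k, gfun (Tvals k) τ' t *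
          ∑ i ∈ Finset.univ.filter (fun i => kIdx i = k ∧ τD i = τ'), (H i : ℝ))
          + ∑ k : Fin K, ((D k).card : ℝ) * c := by
      rw [Finset.mul_sum, ← Finset.sum_add_distrib]
      refine Finset.sum_congr rfl fun k _ => ?_
      rw [Finset.sum_add_distrib, Finset.mul_sum, Finset.sum_const, nsmul_eq_mul]
    have step3 : ∑ k : Fin K, ((D k).card : ℝ) * c ≤ 4 * ε * Hsum := by
      have hcard : ∀ k : Fin K, ((D k).card : ℝ) ≤ 1 / ε + 1 := by
        intro k
        have h1 : ((D k).card : ℝ) ≤ (⌊1 / ε⌋₊ : ℝ) + 1 := by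
          exact_mod_cast hD k
        have h2 : (⌊1 / ε⌋₊ : ℝ) ≤ 1 / ε := Nat.floor_le (by positivity)
        linarith
      calc ∑ k : Fin K, ((D k).card : ℝ) * c ≤ ∑ _k : Fin K, (1 / ε + 1) * c := by
            refine Finset.sum_le_sum fun k _ => ?_
            exact mul_le_mul_of_nonneg_right (hcard k) hc0
        _ = (K : ℝ) * ((1 / ε + 1) * c) := by
            rw [Finset.sum_const, nsmul_eq_mul]; simp
        _ = (1 / ε + 1) * (2 * ε ^ 2) * Hsum := by
            rw [hc]; field_simp
        _ = (2 * ε + 2 * ε ^ 2) * Hsum := by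
            field_simp
        _ ≤ 4 * ε * Hsum := by
            nlinarith [mul_nonneg (mul_nonneg hε0.le (sub_nonneg.mpr hε1.le)) hHsum0]
    calc _ ≤ _ := step1
      _ = _ := step2
      _ ≤ _ := by linarith [step3]
  -- from pointwise to Imax
  have hΛ : 0 < cycleLen T := cycleLen_pos T hT
  have hΛ' : (0:ℤ) < (cycleLen T : ℤ) := by exact_mod_cast hΛ
  have hImaxA : Imax T H τAPX ≤ (1 + ε) * Imax T H τD + 4 * ε * Hsum := by
    refine csSup_le ⟨totalInv T H τAPX 0, ⟨0, ⟨le_refl 0, hΛ'⟩, rfl⟩⟩ ?_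
    rintro x ⟨t, ht, rfl⟩
    have h1 := key t
    have h2 : totalInv T H τD t ≤ Imax T H τD :=
      totalInv_le_Imax T H τD t (by simpa [Finset.mem_Ico, Set.mem_Ico] using ht)
    nlinarith
  -- final arithmetic
  have hHle : Hsum ≤ 2 * OPTdisc T H := by linarith
  have h3 : (1 + ε) * Imax T H τD ≤ (1 + ε) * ((1 + 4 * ε) * OPTdisc T H) :=
    mul_le_mul_of_nonneg_left hgood (by linarith)
  nlinarith [mul_nonneg (mul_nonneg hε0.le (by linarith : (0:ℝ) ≤ 1 - ε)) hOPT0]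
end
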